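/- The Bezoutian of the monomials x_0^d, …, x_n^d equals ∑_{β ≤ (d−1,…,d−1)} x^β y^{(d−1,…,d−1)−β}, where the sum is over all exponent vectors β ∈ ℕ^{n+1} with every component of β at most d−1. -/
import Mathlib


open MvPolynomial

noncomputable section

/-- The "mixed" variable assignment: variables with index `< j` are sent to the
`y`-variables (the second summand), variables with index `≥ j` to the `x`-variables
(the first summand). -/
def mixv (k : Type*) [Field k] (n : ℕ) (j : ℕ) :
    Fin (n + 1) → MvPolynomial (Fin (n + 1) ⊕ Fin (n + 1)) k :=
  fun i => if (i : ℕ) < j then X (Sum.inr i) else X (Sum.inl i)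

/-- `D` is the `j`-th divided difference `Δ_j(f)` of `f`. -/
def IsDivDiff (k : Type*) [Field k] (n : ℕ) (f : MvPolynomial (Fin (n + 1)) k)
    (j : Fin (n + 1)) (D : MvPolynomial (Fin (n + 1) ⊕ Fin (n + 1)) k) : Prop :=
  D * (X (Sum.inl j) - X (Sum.inr j)) =
    aeval (mixv k n (j : ℕ)) f - aeval (mixv k n ((j : ℕ) + 1)) f

/-- The Bezoutian of `x_0^d, …, x_n^d` equals
`∑_{β ≤ (d−1,…,d−1)} x^β y^{(d−1,…,d−1)−β}`, the sum being over all exponent vectors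
`β` with every component at most `d−1`. -/
theorem bezoutian_of_powers
    (k : Type*) [Field k] (n : ℕ) (d : ℕ) (hd : 1 ≤ d)
    (D : Matrix (Fin (n + 1)) (Fin (n + 1)) (MvPolynomial (Fin (n + 1) ⊕ Fin (n + 1)) k))
    (hD : ∀ i j, IsDivDiff k n ((X i : MvPolynomial (Fin (n + 1)) k) ^ d) j (D i j)) :
    D.det =
      ∑ β ∈ Fintype.piFinset (fun _ : Fin (n + 1) => Finset.range d),
        ∏ i : Fin (n + 1),
          X (Sum.inl i) ^ (β i) * X (Sum.inr i) ^ (d - 1 - β i) := by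
  have hne : ∀ j : Fin (n + 1),
      (X (Sum.inl j) - X (Sum.inr j) : MvPolynomial (Fin (n + 1) ⊕ Fin (n + 1)) k) ≠ 0 := by
    intro j
    refine sub_ne_zero.mpr fun h => ?_
    have := MvPolynomial.X_injective h
    simp at this
  have hdiag : D = Matrix.diagonal (fun j : Fin (n + 1) =>
      ∑ β ∈ Finset.range d, X (Sum.inl j) ^ β * X (Sum.inr j) ^ (d - 1 - β)) := by
    apply Matrix.ext; intro i j
    have h := hD i j
    unfold IsDivDiff at h
    rw [map_pow, map_pow, aeval_X, aeval_X] at h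
    by_cases hij : i = j
    · subst hij
      simp only [mixv, lt_irrefl, if_neg, Nat.lt_succ_self, if_pos, Matrix.diagonal_apply_eq] at h ⊢
      have hg := geom_sum₂_mul (X (Sum.inl i) : MvPolynomial (Fin (n + 1) ⊕ Fin (n + 1)) k)
        (X (Sum.inr i)) d
      exact mul_right_cancel₀ (hne i) (h.trans hg.symm)
    · rw [Matrix.diagonal_apply_ne _ hij]
      have hij' : (i : ℕ) ≠ (j : ℕ) := fun hh => hij (Fin.ext hh)
      have hz : mixv k n (j : ℕ) i = mixv k n ((j : ℕ) + 1) i := by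
        unfold mixv
        rcases lt_or_ge (i : ℕ) (j : ℕ) with h1 | h1
        · rw [if_pos h1, if_pos (by omega)]
        · rw [if_neg (by omega), if_neg (by omega)]
      rw [hz, sub_self] at h
      rcases mul_eq_zero.mp h with h0 | h0
      · exact h0
      · exact absurd h0 (hne j)
  rw [hdiag, Matrix.det_diagonal, Finset.prod_univ_sum]
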